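/- arXiv:1001.4868 — 3 statements merged into one kernel-verified Lean document; each statement's English description precedes it below -/
import Mathlib

section
/- The Jacobi theta constants θ₀(τ) = Σ_{n∈ℤ} exp(πi n² τ) and θ₁(τ) = Σ_{n∈ℤ} exp(πi(n² τ + n)), for τ in the upper half plane, satisfy the 2τ-formulas θ₀(2τ)² = (θ₀(τ)² + θ₁(τ)²)/2 and θ₁(2τ)² = θ₀(τ)·θ₁(τ). -/
open Filter
open Complex

noncomputable def jacobiTheta' (i : ℕ) (τ : ℂ) : ℂ :=
  ∑' n : ℤ, Complex.exp (Real.pi * Complex.I * ((n : ℂ) ^ 2 * τ + (i : ℂ) * (n : ℂ)))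

open Complex in
lemma theta_aux_sign (t : ℂ) (n : ℤ) :
    cexp (↑Real.pi * I * ((n : ℂ) ^ 2 * t + ((1 : ℕ) : ℂ) * (n : ℂ)))
      = (-1 : ℂ) ^ n * cexp (↑Real.pi * I * ((n : ℂ) ^ 2 * t)) := by
  rw [show (↑Real.pi * I * ((n : ℂ) ^ 2 * t + ((1 : ℕ) : ℂ) * (n : ℂ)))
      = (n : ℂ) * (↑Real.pi * I) + ↑Real.pi * I * ((n : ℂ) ^ 2 * t) by push_cast; ring,
    Complex.exp_add, Complex.exp_int_mul, Complex.exp_pi_mul_I]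

open Complex in
lemma theta_aux_summable {t : ℂ} (ht : 0 < t.im) :
    Summable (fun n : ℤ => ‖cexp (↑Real.pi * I * ((n : ℂ) ^ 2 * t))‖) := by
  have h := (summable_jacobiTheta₂_term_iff 0 t).mpr ht
  rw [← summable_norm_iff] at h
  refine h.congr fun n => ?_
  unfold jacobiTheta₂_term
  rw [show (2 * ↑Real.pi * I * (n : ℂ) * 0 + ↑Real.pi * I * (n : ℂ) ^ 2 * t)
      = ↑Real.pi * I * ((n : ℂ) ^ 2 * t) by ring]

set_option maxHeartbeats 1000000 in
theorem stmt_6 (τ : ℂ) (hτ : 0 < τ.im) :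
    jacobiTheta' 0 (2 * τ) ^ 2 = (jacobiTheta' 0 τ ^ 2 + jacobiTheta' 1 τ ^ 2) / 2 ∧
    jacobiTheta' 1 (2 * τ) ^ 2 = jacobiTheta' 0 τ * jacobiTheta' 1 τ := by
  set q : ℤ → ℂ := fun n => cexp (↑Real.pi * I * ((n : ℂ) ^ 2 * τ)) with hq
  set Q : ℤ → ℂ := fun n => cexp (↑Real.pi * I * ((n : ℂ) ^ 2 * (2 * τ))) with hQ
  set c : ℤ → ℂ := fun n => (-1 : ℂ) ^ n with hc
  have hcne : ∀ n : ℤ, c n ≠ 0 := fun n => zpow_ne_zero _ (by norm_num)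
  have hqne : ∀ n : ℤ, q n ≠ 0 := fun n => Complex.exp_ne_zero _
  have hQne : ∀ n : ℤ, Q n ≠ 0 := fun n => Complex.exp_ne_zero _
  have hcadd : ∀ m n : ℤ, c (m + n) = c m * c n := fun m n => zpow_add₀ (by norm_num) m n
  have hcsq : ∀ n : ℤ, c n * c n = 1 := by
    intro n
    rw [hc]
    simp only [← zpow_add₀ (show (-1:ℂ) ≠ 0 by norm_num)]
    exact Even.neg_one_zpow ⟨n, rfl⟩
  -- evaluations of jacobiTheta'
  have h0 : jacobiTheta' 0 τ = ∑' n : ℤ, q n := by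
    refine tsum_congr fun n => ?_
    simp [hq]
  have H0 : jacobiTheta' 0 (2 * τ) = ∑' n : ℤ, Q n := by
    refine tsum_congr fun n => ?_
    simp [hQ]
  have h1 : jacobiTheta' 1 τ = ∑' n : ℤ, c n * q n := by
    refine tsum_congr fun n => theta_aux_sign τ n
  have H1 : jacobiTheta' 1 (2 * τ) = ∑' n : ℤ, c n * Q n := by
    refine tsum_congr fun n => theta_aux_sign (2 * τ) n
  -- summability
  have hsq : Summable fun n : ℤ => ‖q n‖ := theta_aux_summable hτ
  have h2τ : 0 < (2 * τ).im := by simp [Complex.mul_im]; linarith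
  have hsQ : Summable fun n : ℤ => ‖Q n‖ := theta_aux_summable h2τ
  have hnorm_cq : ∀ n : ℤ, ‖c n * q n‖ = ‖q n‖ := by
    intro n; rw [norm_mul, hc]; simp
  have hnorm_cQ : ∀ n : ℤ, ‖c n * Q n‖ = ‖Q n‖ := by
    intro n; rw [norm_mul, hc]; simp
  have hscq : Summable fun n : ℤ => ‖c n * q n‖ := hsq.congr fun n => (hnorm_cq n).symm
  have hscQ : Summable fun n : ℤ => ‖c n * Q n‖ := hsQ.congr fun n => (hnorm_cQ n).symm
  -- products as double sums
  have P00 : jacobiTheta' 0 (2 * τ) ^ 2 = ∑' p : ℤ × ℤ, Q p.1 * Q p.2 := by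
    rw [H0, sq, tsum_mul_tsum_of_summable_norm hsQ hsQ]
  have P11 : jacobiTheta' 1 (2 * τ) ^ 2 = ∑' p : ℤ × ℤ, (c p.1 * Q p.1) * (c p.2 * Q p.2) := by
    rw [H1, sq, tsum_mul_tsum_of_summable_norm hscQ hscQ]
  have p00 : jacobiTheta' 0 τ ^ 2 = ∑' p : ℤ × ℤ, q p.1 * q p.2 := by
    rw [h0, sq, tsum_mul_tsum_of_summable_norm hsq hsq]
  have p11 : jacobiTheta' 1 τ ^ 2 = ∑' p : ℤ × ℤ, (c p.1 * q p.1) * (c p.2 * q p.2) := by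
    rw [h1, sq, tsum_mul_tsum_of_summable_norm hscq hscq]
  have p01 : jacobiTheta' 0 τ * jacobiTheta' 1 τ = ∑' p : ℤ × ℤ, q p.1 * (c p.2 * q p.2) := by
    rw [h0, h1, tsum_mul_tsum_of_summable_norm hsq hscq]
  have hsum00 : Summable fun p : ℤ × ℤ => q p.1 * q p.2 :=
    summable_mul_of_summable_norm (f := q) (g := q) hsq hsq
  have hsum11 : Summable fun p : ℤ × ℤ => (c p.1 * q p.1) * (c p.2 * q p.2) :=
    summable_mul_of_summable_norm (f := fun n => c n * q n) (g := fun n => c n * q n) hscq hscq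
  have hsum01 : Summable fun p : ℤ × ℤ => q p.1 * (c p.2 * q p.2) :=
    summable_mul_of_summable_norm (f := q) (g := fun n => c n * q n) hsq hscq
  -- key exponential identity
  have hkey : ∀ a b : ℤ, q (a + b) * q (a - b) = Q a * Q b := by
    intro a b
    rw [hq, hQ]
    simp only []
    rw [← Complex.exp_add, ← Complex.exp_add]
    congr 1
    push_cast
    ring
  -- sign identity on the image
  have hcimg : ∀ a b : ℤ, c (a + b) * c (a - b) = 1 := by
    intro a b
    rw [hc]
    simp only [← zpow_add₀ (show (-1:ℂ) ≠ 0 by norm_num)]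
    exact Even.neg_one_zpow ⟨a, by ring⟩
  have hcodd : ∀ m n : ℤ, ¬ Even (m + n) → c m * c n = -1 := by
    intro m n hmn
    rw [hc]
    simp only [← zpow_add₀ (show (-1:ℂ) ≠ 0 by norm_num)]
    exact Odd.neg_one_zpow (Int.not_even_iff_odd.mp hmn)
  constructor
  · -- first identity
    rw [P00, p00, p11, ← Summable.tsum_add hsum00 hsum11, ← tsum_div_const]
    symm
    refine tsum_eq_tsum_of_ne_zero_bij
      (fun p => (p.1.1 + p.1.2, p.1.1 - p.1.2)) ?_ ?_ ?_
    · rintro ⟨⟨a, b⟩, _⟩ ⟨⟨a', b'⟩, _⟩ h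
      simp only [Prod.mk.injEq] at h
      ext <;> simp <;> omega
    · rintro ⟨m, n⟩ hmn
      by_cases hpar : Even (m + n)
      · obtain ⟨r, hr⟩ := hpar
        refine ⟨⟨(r, m - r), mul_ne_zero (hQne r) (hQne (m - r))⟩, ?_⟩
        simp only [Prod.mk.injEq]
        constructor <;> omega
      · exfalso
        apply hmn
        have : (c m * q m) * (c n * q n) = - (q m * q n) := by
          have := hcodd m n hpar
          calc (c m * q m) * (c n * q n) = (c m * c n) * (q m * q n) := by ring
            _ = - (q m * q n) := by rw [this]; ring
        simp only [Function.mem_support, ne_eq, not_not] at *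
        rw [this]
        ring
    · rintro ⟨⟨a, b⟩, _⟩
      have hsgn : (c (a + b) * q (a + b)) * (c (a - b) * q (a - b)) = q (a + b) * q (a - b) := by
        calc (c (a + b) * q (a + b)) * (c (a - b) * q (a - b))
            = (c (a + b) * c (a - b)) * (q (a + b) * q (a - b)) := by ring
          _ = q (a + b) * q (a - b) := by rw [hcimg a b]; ring
      show (q (a + b) * q (a - b) + (c (a + b) * q (a + b)) * (c (a - b) * q (a - b))) / 2
          = Q a * Q b
      rw [hsgn, hkey a b]
      ring
  · -- second identity
    rw [P11, p01]
    have hswap : (∑' p : ℤ × ℤ, q p.1 * (c p.2 * q p.2))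
        = ∑' p : ℤ × ℤ, q p.2 * (c p.1 * q p.1) := by
      exact ((Equiv.prodComm ℤ ℤ).tsum_eq (fun p : ℤ × ℤ => q p.1 * (c p.2 * q p.2))).symm
    have hsum01' : Summable fun p : ℤ × ℤ => q p.2 * (c p.1 * q p.1) :=
      ((Equiv.prodComm ℤ ℤ).summable_iff
        (f := fun p : ℤ × ℤ => q p.1 * (c p.2 * q p.2))).mpr hsum01
    have hsym : (∑' p : ℤ × ℤ, q p.1 * (c p.2 * q p.2))
        = ∑' p : ℤ × ℤ, (q p.1 * (c p.2 * q p.2) + q p.2 * (c p.1 * q p.1)) / 2 := by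
      rw [tsum_div_const, Summable.tsum_add hsum01 hsum01', ← hswap]
      ring
    rw [hsym]
    symm
    refine tsum_eq_tsum_of_ne_zero_bij
      (fun p => (p.1.1 + p.1.2, p.1.1 - p.1.2)) ?_ ?_ ?_
    · rintro ⟨⟨a, b⟩, _⟩ ⟨⟨a', b'⟩, _⟩ h
      simp only [Prod.mk.injEq] at h
      ext <;> simp <;> omega
    · rintro ⟨m, n⟩ hmn
      by_cases hpar : Even (m + n)
      · obtain ⟨r, hr⟩ := hpar
        refine ⟨⟨(r, m - r), mul_ne_zero (mul_ne_zero (hcne r) (hQne r))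
          (mul_ne_zero (hcne (m - r)) (hQne (m - r)))⟩, ?_⟩
        simp only [Prod.mk.injEq]
        constructor <;> omega
      · exfalso
        apply hmn
        have hmulcn : c m * c n = -1 := hcodd m n hpar
        have hcnm : c n = - c m := by
          have h1 : c m * (c m + c n) = 0 := by
            rw [mul_add, hcsq m, hmulcn]; ring
          rcases mul_eq_zero.mp h1 with h | h
          · exact absurd h (hcne m)
          · exact eq_neg_of_add_eq_zero_right h
        show (q m * (c n * q n) + q n * (c m * q m)) / 2 = 0
        rw [hcnm]
        ring
    · rintro ⟨⟨a, b⟩, _⟩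
      have hceq : c (a - b) = c (a + b) := by
        have h1 : c (a + b) * c (a - b) = 1 := hcimg a b
        have h2 : c (a + b) * c (a + b) = 1 := hcsq (a + b)
        exact mul_left_cancel₀ (hcne (a + b)) (h1.trans h2.symm)
      show (q (a + b) * (c (a - b) * q (a - b)) + q (a - b) * (c (a + b) * q (a + b))) / 2
          = (c a * Q a) * (c b * Q b)
      rw [hceq]
      have hre : (q (a + b) * (c (a + b) * q (a - b)) + q (a - b) * (c (a + b) * q (a + b))) / 2
          = c (a + b) * (q (a + b) * q (a - b)) := by ring
      rw [hre, hkey a b, hcadd a b]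
      ring
end

section
/- For purely imaginary τ = it (t > 0), θ₁(it)² < θ₀(it)² and the arithmetic-geometric mean satisfies μ₁(θ₀(it)², θ₁(it)²) = 1. -/
open Filter

noncomputable def agmSeq (a0 a1 : ℝ) : ℕ → ℝ × ℝ
  | 0 => (a0, a1)
  | n + 1 => (((agmSeq a0 a1 n).1 + (agmSeq a0 a1 n).2) / 2,
      Real.sqrt ((agmSeq a0 a1 n).1 * (agmSeq a0 a1 n).2))

namespace Stmt8

open Real

noncomputable def Ef (s : ℝ) (n : ℤ) : ℝ := Real.exp (-(Real.pi * (n : ℝ) ^ 2 * s))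

noncomputable def sg (n : ℤ) : ℝ := if Even n then 1 else -1

noncomputable def G0 (s : ℝ) : ℝ := ∑' n : ℤ, Ef s n

noncomputable def G1 (s : ℝ) : ℝ := ∑' n : ℤ, sg n * Ef s n

lemma sg_sq (n : ℤ) : sg n * sg n = 1 := by unfold sg; split <;> norm_num

lemma sg_abs (n : ℤ) : |sg n| = 1 := by unfold sg; split <;> norm_num

lemma sg_le_one (n : ℤ) : sg n ≤ 1 := by unfold sg; split <;> norm_num

lemma neg_one_le_sg (n : ℤ) : -1 ≤ sg n := by unfold sg; split <;> norm_num

lemma sg_add (m n : ℤ) : sg (m + n) = sg m * sg n := by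
  unfold sg
  by_cases hm : Even m <;> by_cases hn : Even n <;>
    simp [Int.even_add, hm, hn]

lemma sg_sub (m n : ℤ) : sg (m - n) = sg m * sg n := by
  unfold sg
  by_cases hm : Even m <;> by_cases hn : Even n <;>
    simp [Int.even_sub, hm, hn]

lemma Ef_pos (s : ℝ) (n : ℤ) : 0 < Ef s n := Real.exp_pos _

lemma natAbs_le_sq (n : ℤ) : ((n.natAbs : ℝ)) ≤ (n : ℝ) ^ 2 := by
  have h1 : n.natAbs ≤ n.natAbs ^ 2 := Nat.le_self_pow two_ne_zero _
  have h2 : ((n.natAbs : ℝ)) ≤ ((n.natAbs : ℝ)) ^ 2 := by exact_mod_cast h1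
  have h3 : ((n.natAbs : ℝ)) = |(n : ℝ)| := by
    rw [Nat.cast_natAbs, Int.cast_abs]
  rw [h3] at h2 ⊢
  calc |(n:ℝ)| ≤ |(n:ℝ)| ^ 2 := h2
    _ = (n:ℝ)^2 := sq_abs _

lemma Ef_le (s : ℝ) (hs : 0 < s) (n : ℤ) :
    Ef s n ≤ Real.exp (-(Real.pi * s)) ^ n.natAbs := by
  rw [← Real.exp_nat_mul]
  apply Real.exp_le_exp.mpr
  have hk := natAbs_le_sq n
  nlinarith [Real.pi_pos, hs, hk,
    mul_nonneg (mul_nonneg Real.pi_pos.le hs.le) (sub_nonneg.mpr hk)]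

lemma summable_geomZ {r : ℝ} (h0 : 0 ≤ r) (h1 : r < 1) :
    Summable (fun n : ℤ => r ^ n.natAbs) := by
  apply Summable.of_nat_of_neg <;>
    simpa using summable_geometric_of_lt_one h0 h1

set_option maxHeartbeats 1000000 in
lemma tsum_geomZ {r : ℝ} (h0 : 0 ≤ r) (h1 : r < 1) :
    ∑' n : ℤ, r ^ n.natAbs = (1 - r)⁻¹ + r * (1 - r)⁻¹ := by
  have hneg : Summable (fun n : ℕ => r ^ ((-((n : ℤ) + 1)).natAbs)) := by
    have he : (fun n : ℕ => r ^ ((-((n : ℤ) + 1)).natAbs)) = fun n : ℕ => r * r ^ n := by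
      funext n
      have hn : (-((n : ℤ) + 1)).natAbs = n + 1 := by omega
      rw [hn, pow_succ']
    rw [he]
    exact (summable_geometric_of_lt_one h0 h1).mul_left r
  rw [tsum_of_nat_of_neg_add_one (by simpa using summable_geometric_of_lt_one h0 h1) hneg]
  have e1 : ∑' n : ℕ, r ^ ((n : ℤ)).natAbs = (1 - r)⁻¹ := by
    simpa using tsum_geometric_of_lt_one h0 h1
  have e2 : ∑' n : ℕ, r ^ ((-((n : ℤ) + 1)).natAbs) = r * (1 - r)⁻¹ := by
    have : ∀ n : ℕ, r ^ ((-((n : ℤ) + 1)).natAbs) = r * r ^ n := by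
      intro n
      have : (-((n : ℤ) + 1)).natAbs = n + 1 := by omega
      rw [this, pow_succ']
    rw [tsum_congr this, tsum_mul_left, tsum_geometric_of_lt_one h0 h1]
  rw [e1, e2]

lemma r_nonneg (s : ℝ) : 0 ≤ Real.exp (-(Real.pi * s)) := (Real.exp_pos _).le

lemma r_lt_one {s : ℝ} (hs : 0 < s) : Real.exp (-(Real.pi * s)) < 1 := by
  apply Real.exp_lt_one_iff.mpr
  nlinarith [Real.pi_pos]

lemma summable_Ef {s : ℝ} (hs : 0 < s) : Summable (Ef s) :=
  Summable.of_nonneg_of_le (fun n => (Ef_pos s n).le) (Ef_le s hs)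
    (summable_geomZ (r_nonneg s) (r_lt_one hs))

lemma summable_sgEf {s : ℝ} (hs : 0 < s) : Summable (fun n : ℤ => sg n * Ef s n) := by
  apply Summable.of_norm_bounded (summable_Ef hs)
  intro n
  rw [Real.norm_eq_abs, abs_mul, sg_abs, one_mul, abs_of_pos (Ef_pos s n)]

lemma summable_normEf {s : ℝ} (hs : 0 < s) : Summable (fun n : ℤ => ‖Ef s n‖) :=
  (summable_Ef hs).congr fun n => by
    rw [Real.norm_eq_abs, abs_of_pos (Ef_pos s n)]

lemma summable_normsgEf {s : ℝ} (hs : 0 < s) :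
    Summable (fun n : ℤ => ‖sg n * Ef s n‖) :=
  (summable_Ef hs).congr fun n => by
    rw [Real.norm_eq_abs, abs_mul, sg_abs, one_mul, abs_of_pos (Ef_pos s n)]

lemma Ef_zero (s : ℝ) : Ef s 0 = 1 := by simp [Ef]

lemma one_le_G0 {s : ℝ} (hs : 0 < s) : 1 ≤ G0 s := by
  have := Summable.le_tsum (summable_Ef hs) 0 (fun j _ => (Ef_pos s j).le)
  rwa [Ef_zero] at this

lemma G0_pos {s : ℝ} (hs : 0 < s) : 0 < G0 s := lt_of_lt_of_le one_pos (one_le_G0 hs)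

lemma G0_le {s : ℝ} (hs : 0 < s) :
    G0 s ≤ (1 - Real.exp (-(Real.pi * s)))⁻¹ +
      Real.exp (-(Real.pi * s)) * (1 - Real.exp (-(Real.pi * s)))⁻¹ := by
  rw [← tsum_geomZ (r_nonneg s) (r_lt_one hs)]
  exact Summable.tsum_le_tsum (Ef_le s hs) (summable_Ef hs) (summable_geomZ (r_nonneg s) (r_lt_one hs))

lemma G1_ge {s : ℝ} (hs : 0 < s) :
    2 - ((1 - Real.exp (-(Real.pi * s)))⁻¹ +
      Real.exp (-(Real.pi * s)) * (1 - Real.exp (-(Real.pi * s)))⁻¹) ≤ G1 s := by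
  classical
  set r := Real.exp (-(Real.pi * s)) with hr
  have h0 : 0 ≤ r := r_nonneg s
  have h1 : r < 1 := r_lt_one hs
  have hsum := summable_sgEf hs
  have hG1 : G1 s = 1 + ∑' n : ℤ, (if n = 0 then 0 else sg n * Ef s n) := by
    have := Summable.tsum_eq_add_tsum_ite hsum 0
    rw [G1, this]
    norm_num [sg, Ef_zero]
  have hptw : ∀ n : ℤ, ‖if n = 0 then 0 else sg n * Ef s n‖ ≤
      (if n = 0 then 0 else r ^ n.natAbs) := by
    intro n
    by_cases h : n = 0
    · simp [h]
    · simp only [h, if_false]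
      rw [Real.norm_eq_abs, abs_mul, sg_abs, one_mul, abs_of_pos (Ef_pos s n)]
      exact Ef_le s hs n
  have hgeom_ite : Summable (fun n : ℤ => if n = 0 then 0 else r ^ n.natAbs) := by
    apply Summable.of_nonneg_of_le _ _ (summable_geomZ h0 h1)
    · intro n; split <;> positivity
    · intro n; split
      · positivity
      · exact le_rfl
  have hnorm : Summable (fun n : ℤ => ‖if n = 0 then 0 else sg n * Ef s n‖) :=
    Summable.of_nonneg_of_le (fun n => norm_nonneg _) hptw hgeom_ite
  have habs : ‖∑' n : ℤ, (if n = 0 then 0 else sg n * Ef s n)‖ ≤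
      ∑' n : ℤ, (if n = 0 then 0 else r ^ n.natAbs) :=
    le_trans (norm_tsum_le_tsum_norm hnorm) (Summable.tsum_le_tsum hptw hnorm hgeom_ite)
  have hval : ∑' n : ℤ, (if n = 0 then 0 else r ^ n.natAbs) =
      ((1 - r)⁻¹ + r * (1 - r)⁻¹) - 1 := by
    have h := Summable.tsum_eq_add_tsum_ite (summable_geomZ h0 h1) 0
    rw [tsum_geomZ h0 h1] at h
    simp only [Int.natAbs_zero, pow_zero] at h
    linarith
  rw [hval] at habs
  rw [Real.norm_eq_abs] at habs
  have hlow := (abs_le.mp habs).1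
  rw [hG1]
  linarith

lemma G1_pos_of_one_le {s : ℝ} (hs1 : 1 ≤ s) : 0 < G1 s := by
  have hs : 0 < s := lt_of_lt_of_le one_pos hs1
  set r := Real.exp (-(Real.pi * s)) with hrdef
  have h0 : 0 ≤ r := r_nonneg s
  have h1 : r < 1 := r_lt_one hs
  have hr3 : r < 1 / 3 := by
    have hexp3 : (4 : ℝ) ≤ Real.exp 3 := by
      have := Real.add_one_le_exp (3 : ℝ)
      linarith
    have hmono : r ≤ Real.exp (-3) := by
      apply Real.exp_le_exp.mpr
      nlinarith [Real.pi_gt_three]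
    have : Real.exp (-3) = (Real.exp 3)⁻¹ := Real.exp_neg 3
    have hinv : (Real.exp 3)⁻¹ ≤ 4⁻¹ := by
      apply inv_anti₀ (by norm_num)
      linarith
    rw [this] at hmono
    linarith
  have h1r : 0 < 1 - r := by linarith
  have hB : (1 - r)⁻¹ + r * (1 - r)⁻¹ < 2 := by
    have key : (1 - r)⁻¹ * (1 - r) = 1 := inv_mul_cancel₀ (ne_of_gt h1r)
    have hxpos : 0 < (1 - r)⁻¹ := inv_pos.mpr h1r
    nlinarith [key, hxpos, mul_pos hxpos (show (0:ℝ) < 1 - 3 * r by linarith)]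
  have := G1_ge hs
  linarith

lemma Ef_mul_Ef (s : ℝ) (m n : ℤ) :
    Ef s (m + n) * Ef s (m - n) = Ef (2 * s) m * Ef (2 * s) n := by
  unfold Ef
  rw [← Real.exp_add, ← Real.exp_add]
  congr 1
  push_cast
  ring

lemma psi_inj : Function.Injective (fun p : ℤ × ℤ => ((p.1 + p.2, p.1 - p.2) : ℤ × ℤ)) := by
  rintro ⟨a, b⟩ ⟨c, d⟩ h
  simp only [Prod.mk.injEq] at h
  have h1 := h.1
  have h2 := h.2
  simp only [Prod.mk.injEq]
  omega

lemma psi_range {p : ℤ × ℤ}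
    (hp : p ∉ Set.range (fun p : ℤ × ℤ => ((p.1 + p.2, p.1 - p.2) : ℤ × ℤ))) :
    ¬ Even (p.1 + p.2) := by
  intro h
  obtain ⟨k, hk⟩ := h
  exact hp ⟨(k, p.1 - k), by simp only [Prod.mk.injEq, Prod.ext_iff]; constructor <;> omega⟩

lemma sg_add_sg_of_odd {a b : ℤ} (h : ¬ Even (a + b)) : sg a + sg b = 0 := by
  rw [Int.even_add] at h
  unfold sg
  by_cases ha : Even a <;> by_cases hb : Even b <;> simp [ha, hb] at h ⊢ <;> tauto

lemma sg_mul_sg_of_odd {a b : ℤ} (h : ¬ Even (a + b)) : sg a * sg b = -1 := by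
  rw [← sg_add]
  simp [sg, h]

set_option maxHeartbeats 2000000 in
lemma id1 {s : ℝ} (hs : 0 < s) : G0 s * G1 s = G1 (2 * s) ^ 2 := by
  have h2s : 0 < 2 * s := by linarith
  have hEn := summable_normEf hs
  have hsEn := summable_normsgEf hs
  have e1 : G0 s * G1 s = ∑' p : ℤ × ℤ, Ef s p.1 * (sg p.2 * Ef s p.2) := by
    rw [G0, G1]; exact tsum_mul_tsum_of_summable_norm hEn hsEn
  have e2 : G1 s * G0 s = ∑' p : ℤ × ℤ, (sg p.1 * Ef s p.1) * Ef s p.2 := by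
    rw [G0, G1]; exact tsum_mul_tsum_of_summable_norm hsEn hEn
  set h : ℤ × ℤ → ℝ := fun p =>
    ((sg p.1 * Ef s p.1) * Ef s p.2 + Ef s p.1 * (sg p.2 * Ef s p.2)) * 2⁻¹ with hh
  have hsum1 : Summable (fun p : ℤ × ℤ => (sg p.1 * Ef s p.1) * Ef s p.2) :=
    summable_mul_of_summable_norm hsEn hEn
  have hsum2 : Summable (fun p : ℤ × ℤ => Ef s p.1 * (sg p.2 * Ef s p.2)) :=
    summable_mul_of_summable_norm hEn hsEn
  have e3 : ∑' p : ℤ × ℤ, h p = G0 s * G1 s := by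
    rw [hh]
    rw [tsum_mul_right, Summable.tsum_add hsum1 hsum2, ← e1, ← e2]
    ring
  have hsupp : Function.support h ⊆
      Set.range (fun p : ℤ × ℤ => ((p.1 + p.2, p.1 - p.2) : ℤ × ℤ)) := by
    intro p hp
    by_contra hcon
    apply hp
    have hodd := psi_range hcon
    have hz := sg_add_sg_of_odd hodd
    have : h p = (sg p.1 + sg p.2) * (Ef s p.1 * Ef s p.2) * 2⁻¹ := by rw [hh]; ring
    rw [this, hz]
    ring
  have e4 : ∑' q : ℤ × ℤ, h ((q.1 + q.2, q.1 - q.2)) = ∑' p : ℤ × ℤ, h p :=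
    psi_inj.tsum_eq hsupp
  have e5 : ∀ q : ℤ × ℤ, h ((q.1 + q.2, q.1 - q.2)) =
      (sg q.1 * Ef (2 * s) q.1) * (sg q.2 * Ef (2 * s) q.2) := by
    intro q
    have hE := Ef_mul_Ef s q.1 q.2
    rw [hh]
    simp only
    rw [sg_add, sg_sub]
    linear_combination (sg q.1 * sg q.2) * hE
  have e6 : G1 (2 * s) * G1 (2 * s) =
      ∑' q : ℤ × ℤ, (sg q.1 * Ef (2 * s) q.1) * (sg q.2 * Ef (2 * s) q.2) := by
    rw [G1]; exact tsum_mul_tsum_of_summable_norm (summable_normsgEf h2s) (summable_normsgEf h2s)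
  calc G0 s * G1 s = ∑' p : ℤ × ℤ, h p := e3.symm
    _ = ∑' q : ℤ × ℤ, h ((q.1 + q.2, q.1 - q.2)) := e4.symm
    _ = ∑' q : ℤ × ℤ, (sg q.1 * Ef (2 * s) q.1) * (sg q.2 * Ef (2 * s) q.2) := tsum_congr e5
    _ = G1 (2 * s) * G1 (2 * s) := e6.symm
    _ = G1 (2 * s) ^ 2 := (sq _).symm

set_option maxHeartbeats 2000000 in
lemma id2 {s : ℝ} (hs : 0 < s) : (G0 s ^ 2 + G1 s ^ 2) / 2 = G0 (2 * s) ^ 2 := by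
  have h2s : 0 < 2 * s := by linarith
  have hEn := summable_normEf hs
  have hsEn := summable_normsgEf hs
  have e1 : G0 s * G0 s = ∑' p : ℤ × ℤ, Ef s p.1 * Ef s p.2 := by
    rw [G0]; exact tsum_mul_tsum_of_summable_norm hEn hEn
  have e2 : G1 s * G1 s = ∑' p : ℤ × ℤ, (sg p.1 * Ef s p.1) * (sg p.2 * Ef s p.2) := by
    rw [G1]; exact tsum_mul_tsum_of_summable_norm hsEn hsEn
  set h : ℤ × ℤ → ℝ := fun p =>
    (Ef s p.1 * Ef s p.2 + (sg p.1 * Ef s p.1) * (sg p.2 * Ef s p.2)) * 2⁻¹ with hh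
  have hsum1 : Summable (fun p : ℤ × ℤ => Ef s p.1 * Ef s p.2) :=
    summable_mul_of_summable_norm hEn hEn
  have hsum2 : Summable (fun p : ℤ × ℤ => (sg p.1 * Ef s p.1) * (sg p.2 * Ef s p.2)) :=
    summable_mul_of_summable_norm hsEn hsEn
  have e3 : ∑' p : ℤ × ℤ, h p = (G0 s ^ 2 + G1 s ^ 2) / 2 := by
    rw [hh]
    rw [tsum_mul_right, Summable.tsum_add hsum1 hsum2, ← e1, ← e2]
    ring
  have hsupp : Function.support h ⊆
      Set.range (fun p : ℤ × ℤ => ((p.1 + p.2, p.1 - p.2) : ℤ × ℤ)) := by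
    intro p hp
    by_contra hcon
    apply hp
    have hodd := psi_range hcon
    have hz := sg_mul_sg_of_odd hodd
    have : h p = (1 + sg p.1 * sg p.2) * (Ef s p.1 * Ef s p.2) * 2⁻¹ := by rw [hh]; ring
    rw [this, hz]
    ring
  have e4 : ∑' q : ℤ × ℤ, h ((q.1 + q.2, q.1 - q.2)) = ∑' p : ℤ × ℤ, h p :=
    psi_inj.tsum_eq hsupp
  have e5 : ∀ q : ℤ × ℤ, h ((q.1 + q.2, q.1 - q.2)) = Ef (2 * s) q.1 * Ef (2 * s) q.2 := by
    intro q
    have hE := Ef_mul_Ef s q.1 q.2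
    have hA := sg_sq q.1
    have hB := sg_sq q.2
    rw [hh]
    simp only
    rw [sg_add, sg_sub]
    linear_combination (2⁻¹ + 2⁻¹ * (sg q.1 * sg q.1) * (sg q.2 * sg q.2)) * hE +
      (2⁻¹ * (Ef (2 * s) q.1 * Ef (2 * s) q.2) * (sg q.2 * sg q.2)) * hA +
      (2⁻¹ * (Ef (2 * s) q.1 * Ef (2 * s) q.2)) * hB
  have e6 : G0 (2 * s) * G0 (2 * s) = ∑' q : ℤ × ℤ, Ef (2 * s) q.1 * Ef (2 * s) q.2 := by
    rw [G0]; exact tsum_mul_tsum_of_summable_norm (summable_normEf h2s) (summable_normEf h2s)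
  calc (G0 s ^ 2 + G1 s ^ 2) / 2 = ∑' p : ℤ × ℤ, h p := e3.symm
    _ = ∑' q : ℤ × ℤ, h ((q.1 + q.2, q.1 - q.2)) := e4.symm
    _ = ∑' q : ℤ × ℤ, Ef (2 * s) q.1 * Ef (2 * s) q.2 := tsum_congr e5
    _ = G0 (2 * s) * G0 (2 * s) := e6.symm
    _ = G0 (2 * s) ^ 2 := (sq _).symm

lemma G1_pos_aux : ∀ N : ℕ, ∀ s : ℝ, 0 < s → 0 < G1 (2 ^ N * s) → 0 < G1 s := by
  intro N
  induction N with
  | zero => intro s hs h; simpa using h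
  | succ N ih =>
    intro s hs h
    have h' : 0 < G1 (2 ^ N * (2 * s)) := by
      have : (2 : ℝ) ^ N * (2 * s) = 2 ^ (N + 1) * s := by ring
      rw [this]
      exact h
    have hG2 : 0 < G1 (2 * s) := ih (2 * s) (by linarith) h'
    have hprod : 0 < G0 s * G1 s := by
      rw [id1 hs]
      positivity
    nlinarith [one_le_G0 hs]

lemma G1_pos {s : ℝ} (hs : 0 < s) : 0 < G1 s := by
  obtain ⟨N, hN⟩ := pow_unbounded_of_one_lt (s⁻¹) (one_lt_two (α := ℝ))
  apply G1_pos_aux N s hs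
  apply G1_pos_of_one_le
  have : s⁻¹ * s = 1 := inv_mul_cancel₀ (ne_of_gt hs)
  nlinarith [hN, hs]

lemma G1_lt_G0 {s : ℝ} (hs : 0 < s) : G1 s < G0 s := by
  have hsub : G0 s - G1 s = ∑' n : ℤ, (Ef s n - sg n * Ef s n) :=
    (Summable.tsum_sub (summable_Ef hs) (summable_sgEf hs)).symm
  have hpos : 0 < ∑' n : ℤ, (Ef s n - sg n * Ef s n) := by
    apply Summable.tsum_pos (Summable.sub (summable_Ef hs) (summable_sgEf hs)) _ 1
    · have : sg (1 : ℤ) = -1 := by simp [sg]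
      rw [this]
      nlinarith [Ef_pos s 1]
    · intro n
      nlinarith [Ef_pos s n, sg_le_one n]
  linarith

lemma neg_G0_lt_G1 {s : ℝ} (hs : 0 < s) : -G0 s < G1 s := by
  have hsub : G1 s + G0 s = ∑' n : ℤ, (sg n * Ef s n + Ef s n) :=
    (Summable.tsum_add (summable_sgEf hs) (summable_Ef hs)).symm
  have hpos : 0 < ∑' n : ℤ, (sg n * Ef s n + Ef s n) := by
    apply Summable.tsum_pos (Summable.add (summable_sgEf hs) (summable_Ef hs)) _ 0
    · have : sg (0 : ℤ) = 1 := by simp [sg]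
      rw [this]
      nlinarith [Ef_pos s 0]
    · intro n
      nlinarith [Ef_pos s n, neg_one_le_sg n]
  linarith

lemma agm_eq {t : ℝ} (ht : 0 < t) :
    ∀ n : ℕ, agmSeq (G0 t ^ 2) (G1 t ^ 2) n = (G0 (2 ^ n * t) ^ 2, G1 (2 ^ n * t) ^ 2) := by
  intro n
  induction n with
  | zero => simp [agmSeq]
  | succ n ih =>
    have hu : 0 < 2 ^ n * t := by positivity
    have hstep : (2 : ℝ) * (2 ^ n * t) = 2 ^ (n + 1) * t := by ring
    have hfst : ((G0 (2 ^ n * t) ^ 2) + (G1 (2 ^ n * t) ^ 2)) / 2 = G0 (2 ^ (n + 1) * t) ^ 2 := by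
      rw [← hstep]; exact id2 hu
    have hsnd : Real.sqrt ((G0 (2 ^ n * t) ^ 2) * (G1 (2 ^ n * t) ^ 2)) =
        G1 (2 ^ (n + 1) * t) ^ 2 := by
      have hnn : 0 ≤ G0 (2 ^ n * t) * G1 (2 ^ n * t) :=
        le_of_lt (mul_pos (G0_pos hu) (G1_pos hu))
      rw [show (G0 (2 ^ n * t) ^ 2) * (G1 (2 ^ n * t) ^ 2) =
          (G0 (2 ^ n * t) * G1 (2 ^ n * t)) ^ 2 by ring,
        Real.sqrt_sq hnn, ← hstep, ← id1 hu]
    show (((agmSeq (G0 t ^ 2) (G1 t ^ 2) n).1 + (agmSeq (G0 t ^ 2) (G1 t ^ 2) n).2) / 2,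
        Real.sqrt ((agmSeq (G0 t ^ 2) (G1 t ^ 2) n).1 * (agmSeq (G0 t ^ 2) (G1 t ^ 2) n).2)) = _
    rw [ih]
    exact Prod.ext hfst hsnd

lemma G0_tendsto {t : ℝ} (ht : 0 < t) :
    Tendsto (fun n : ℕ => G0 (2 ^ n * t)) atTop (nhds 1) := by
  have hu : Tendsto (fun n : ℕ => (2 : ℝ) ^ n * t) atTop atTop :=
    (tendsto_pow_atTop_atTop_of_one_lt one_lt_two).atTop_mul_const ht
  have hr : Tendsto (fun n : ℕ => Real.exp (-(Real.pi * (2 ^ n * t)))) atTop (nhds 0) := by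
    apply Real.tendsto_exp_atBot.comp
    apply tendsto_neg_atTop_atBot.comp
    exact hu.const_mul_atTop Real.pi_pos
  have hupper : Tendsto (fun n : ℕ => (1 - Real.exp (-(Real.pi * (2 ^ n * t))))⁻¹ +
      Real.exp (-(Real.pi * (2 ^ n * t))) * (1 - Real.exp (-(Real.pi * (2 ^ n * t))))⁻¹)
      atTop (nhds 1) := by
    have h1 : Tendsto (fun n : ℕ => (1 - Real.exp (-(Real.pi * (2 ^ n * t))))⁻¹) atTop
        (nhds 1) := by
      have := (tendsto_const_nhds (x := (1:ℝ)) (f := atTop (α := ℕ))).sub hr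
      rw [sub_zero] at this
      have h2 := this.inv₀ (by norm_num)
      simpa using h2
    have := h1.add (hr.mul h1)
    simpa using this
  apply tendsto_of_tendsto_of_tendsto_of_le_of_le
    (tendsto_const_nhds (x := (1:ℝ)) (f := atTop (α := ℕ))) hupper
  · intro n
    exact one_le_G0 (by positivity)
  · intro n
    exact G0_le (by positivity)

lemma cexp_npi (n : ℤ) : Complex.exp ((n : ℂ) * (Real.pi * Complex.I)) = ((sg n : ℝ) : ℂ) := by
  rcases Int.even_or_odd n with ⟨k, hk⟩ | ⟨k, hk⟩
  · have harg : ((n : ℂ)) * (Real.pi * Complex.I) = (k : ℂ) * (2 * Real.pi * Complex.I) := by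
      rw [hk]; push_cast; ring
    rw [harg, Complex.exp_int_mul_two_pi_mul_I]
    have : Even n := ⟨k, hk⟩
    simp [sg, this]
  · have harg : ((n : ℂ)) * (Real.pi * Complex.I) =
        (k : ℂ) * (2 * Real.pi * Complex.I) + Real.pi * Complex.I := by
      rw [hk]; push_cast; ring
    rw [harg, Complex.exp_add, Complex.exp_int_mul_two_pi_mul_I, Complex.exp_pi_mul_I]
    have : ¬ Even n := by simp [hk, Int.even_add_one, Int.even_mul]
    simp [sg, this]

lemma bridge0 {s : ℝ} (hs : 0 < s) :
    jacobiTheta' 0 (s * Complex.I) = ((G0 s : ℝ) : ℂ) := by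
  rw [jacobiTheta', G0]
  have hterm : ∀ n : ℤ, Complex.exp ((Real.pi : ℂ) * Complex.I *
      ((n : ℂ) ^ 2 * ((s : ℂ) * Complex.I) + ((0 : ℕ) : ℂ) * (n : ℂ))) = ((Ef s n : ℝ) : ℂ) := by
    intro n
    rw [Ef, Complex.ofReal_exp]
    congr 1
    push_cast
    linear_combination ((Real.pi : ℂ) * (n : ℂ) ^ 2 * (s : ℂ)) * Complex.I_sq
  rw [tsum_congr hterm]
  exact (Complex.ofRealCLM.map_tsum (summable_Ef hs)).symm

lemma bridge1 {s : ℝ} (hs : 0 < s) :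
    jacobiTheta' 1 (s * Complex.I) = ((G1 s : ℝ) : ℂ) := by
  rw [jacobiTheta', G1]
  have hterm : ∀ n : ℤ, Complex.exp ((Real.pi : ℂ) * Complex.I *
      ((n : ℂ) ^ 2 * ((s : ℂ) * Complex.I) + ((1 : ℕ) : ℂ) * (n : ℂ))) =
      ((sg n * Ef s n : ℝ) : ℂ) := by
    intro n
    have harg : (Real.pi : ℂ) * Complex.I *
        ((n : ℂ) ^ 2 * ((s : ℂ) * Complex.I) + ((1 : ℕ) : ℂ) * (n : ℂ)) =
        ((-(Real.pi * (n : ℝ) ^ 2 * s) : ℝ) : ℂ) + (n : ℂ) * (Real.pi * Complex.I) := by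
      push_cast
      linear_combination ((Real.pi : ℂ) * (n : ℂ) ^ 2 * (s : ℂ)) * Complex.I_sq
    rw [harg, Complex.exp_add, cexp_npi, ← Complex.ofReal_exp, ← Complex.ofReal_mul, Ef,
      mul_comm]
  rw [tsum_congr hterm]
  exact (Complex.ofRealCLM.map_tsum (summable_sgEf hs)).symm

end Stmt8


theorem stmt_8 (t : ℝ) (ht : 0 < t) :
    (jacobiTheta' 1 (t * Complex.I) ^ 2).re < (jacobiTheta' 0 (t * Complex.I) ^ 2).re ∧
    ∀ l : ℝ,
      Tendsto (fun n => (agmSeq ((jacobiTheta' 0 (t * Complex.I) ^ 2).re)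
        ((jacobiTheta' 1 (t * Complex.I) ^ 2).re) n).1) atTop (nhds l) →
      Tendsto (fun n => (agmSeq ((jacobiTheta' 0 (t * Complex.I) ^ 2).re)
        ((jacobiTheta' 1 (t * Complex.I) ^ 2).re) n).2) atTop (nhds l) →
      l = 1 := by
  have hb0 : (jacobiTheta' 0 (t * Complex.I) ^ 2).re = Stmt8.G0 t ^ 2 := by
    rw [Stmt8.bridge0 ht, ← Complex.ofReal_pow, Complex.ofReal_re]
  have hb1 : (jacobiTheta' 1 (t * Complex.I) ^ 2).re = Stmt8.G1 t ^ 2 := by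
    rw [Stmt8.bridge1 ht, ← Complex.ofReal_pow, Complex.ofReal_re]
  constructor
  · rw [hb0, hb1]
    exact sq_lt_sq' (Stmt8.neg_G0_lt_G1 ht) (Stmt8.G1_lt_G0 ht)
  · intro l hl1 _
    rw [hb0, hb1] at hl1
    have heq : (fun n : ℕ => (agmSeq (Stmt8.G0 t ^ 2) (Stmt8.G1 t ^ 2) n).1) =
        fun n : ℕ => Stmt8.G0 (2 ^ n * t) ^ 2 := by
      funext n
      rw [Stmt8.agm_eq ht n]
    have hlim : Tendsto (fun n : ℕ => (agmSeq (Stmt8.G0 t ^ 2) (Stmt8.G1 t ^ 2) n).1)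
        atTop (nhds 1) := by
      rw [heq]
      have := (Stmt8.G0_tendsto ht).pow 2
      simpa using this
    exact tendsto_nhds_unique hl1 hlim
end

section
/- If 0 < a₁ < a₀ and τ = it with t > 0 satisfies θ₁(τ)²/θ₀(τ)² = a₁/a₀, then a₀/μ₁(a₀, a₁) = θ₀(τ)². -/
open Filter

noncomputable def th0 (t : ℝ) : ℝ := ∑' n : ℤ, Real.exp (-Real.pi * (n : ℝ) ^ 2 * t)
noncomputable def th1 (t : ℝ) : ℝ :=
  ∑' n : ℤ, (-1 : ℝ) ^ n * Real.exp (-Real.pi * (n : ℝ) ^ 2 * t)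

lemma summable_th0 {t : ℝ} (ht : 0 < t) :
    Summable fun n : ℤ => Real.exp (-Real.pi * (n : ℝ) ^ 2 * t) := by
  have h := summable_pow_mul_jacobiTheta₂_term_bound 0 ht 0
  refine h.congr fun n => ?_
  simp only [pow_zero, one_mul, mul_zero, zero_mul, sub_zero]
  congr 1
  ring

lemma summable_th1 {t : ℝ} (ht : 0 < t) :
    Summable fun n : ℤ => (-1 : ℝ) ^ n * Real.exp (-Real.pi * (n : ℝ) ^ 2 * t) := by
  refine (summable_th0 ht).of_norm_bounded fun n => ?_
  rw [Real.norm_eq_abs, abs_mul, abs_neg_one_zpow, one_mul, Real.abs_exp]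

section Dup
variable {t : ℝ}

local notation "E" => fun (t : ℝ) (n : ℤ) => Real.exp (-Real.pi * (n : ℝ) ^ 2 * t)

lemma summable_prod0 (ht : 0 < t) :
    Summable fun p : ℤ × ℤ => E t p.1 * E t p.2 :=
  (summable_th0 ht).mul_of_nonneg (summable_th0 ht)
    (fun _ => (Real.exp_pos _).le) (fun _ => (Real.exp_pos _).le)

lemma E_mul (a b : ℤ) : E t a * E t b = Real.exp (-Real.pi * ((a:ℝ)^2 + (b:ℝ)^2) * t) := by
  rw [← Real.exp_add]; congr 1; ring

def psi : ℤ × ℤ → ℤ × ℤ := fun p => (p.1 + p.2, p.1 - p.2)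

lemma psi_inj : Function.Injective psi := by
  intro a b h
  simp only [psi, Prod.ext_iff] at h ⊢
  omega

lemma E_psi (r s : ℤ) : E t (r + s) * E t (r - s) = E (2*t) r * E (2*t) s := by
  rw [E_mul, E_mul]
  congr 1
  push_cast
  ring

lemma dup1 (ht : 0 < t) :
    (∑' n : ℤ, E t n) ^ 2 + (∑' n : ℤ, (-1:ℝ)^n * E t n) ^ 2
      = 2 * (∑' n : ℤ, E (2*t) n) ^ 2 := by
  have h2t : (0:ℝ) < 2 * t := by linarith
  have hs0 := summable_th0 ht
  have hs1 := summable_th1 ht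
  have hp0 := summable_prod0 ht
  have hp1 : Summable fun p : ℤ × ℤ => ((-1:ℝ)^p.1 * E t p.1) * ((-1:ℝ)^p.2 * E t p.2) := by
    refine hp0.of_norm_bounded fun p => ?_
    rw [Real.norm_eq_abs, abs_mul, abs_mul, abs_mul, abs_neg_one_zpow, abs_neg_one_zpow,
      one_mul, one_mul, Real.abs_exp, Real.abs_exp]
  rw [sq, sq, Summable.tsum_mul_tsum hs0 hs0 hp0, Summable.tsum_mul_tsum hs1 hs1 hp1, ← Summable.tsum_add hp0 hp1]
  have hF : ∀ p : ℤ × ℤ, E t p.1 * E t p.2 + ((-1:ℝ)^p.1 * E t p.1) * ((-1:ℝ)^p.2 * E t p.2)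
      = (1 + (-1:ℝ)^(p.1 + p.2)) * (E t p.1 * E t p.2) := by
    intro p
    rw [zpow_add₀ (by norm_num : (-1:ℝ) ≠ 0)]
    ring
  rw [tsum_congr hF]
  have hsupp : Function.support
      (fun p : ℤ × ℤ => (1 + (-1:ℝ)^(p.1 + p.2)) * (E t p.1 * E t p.2)) ⊆ Set.range psi := by
    intro p hp
    rcases Int.even_or_odd (p.1 + p.2) with he | ho
    · obtain ⟨k, hk⟩ := he
      exact ⟨(k, p.1 - k), by simp only [psi, Prod.ext_iff]; omega⟩
    · exfalso
      apply hp
      show (1 + (-1:ℝ)^(p.1 + p.2)) * (E t p.1 * E t p.2) = 0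
      rw [ho.neg_one_zpow]
      ring
  rw [← psi_inj.tsum_eq hsupp]
  have hR : ∀ p : ℤ × ℤ,
      (1 + (-1:ℝ)^((psi p).1 + (psi p).2)) * (E t (psi p).1 * E t (psi p).2)
        = 2 * (E (2*t) p.1 * E (2*t) p.2) := by
    intro ⟨r, s⟩
    have he : Even ((r + s) + (r - s)) := ⟨r, by ring⟩
    show (1 + (-1:ℝ)^((r+s) + (r-s))) * (E t (r+s) * E t (r-s)) = _
    rw [he.neg_one_zpow, E_psi]
    ring
  rw [tsum_congr hR, tsum_mul_left, sq, Summable.tsum_mul_tsum (summable_th0 h2t) (summable_th0 h2t)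
    (summable_prod0 h2t)]

lemma neg_one_zpow_inv (s : ℤ) : ((-1:ℝ)^s)⁻¹ = (-1)^s := by
  rcases Int.even_or_odd s with h | h
  · rw [h.neg_one_zpow]; norm_num
  · rw [h.neg_one_zpow]; norm_num

lemma neg_one_zpow_sub (r s : ℤ) : (-1:ℝ)^(r-s) = (-1)^r * (-1)^s := by
  rw [zpow_sub₀ (by norm_num : (-1:ℝ) ≠ 0), div_eq_mul_inv, neg_one_zpow_inv]

lemma dup2 (ht : 0 < t) :
    (∑' n : ℤ, E t n) * (∑' n : ℤ, (-1:ℝ)^n * E t n)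
      = (∑' n : ℤ, (-1:ℝ)^n * E (2*t) n) ^ 2 := by
  have h2t : (0:ℝ) < 2 * t := by linarith
  have hs0 := summable_th0 ht
  have hs1 := summable_th1 ht
  have hp0 := summable_prod0 ht
  have habs : ∀ (u : ℝ) (p : ℤ × ℤ) (a b : ℝ), (a = 1 ∨ a = -1) → (b = 1 ∨ b = -1) →
      |a * E u p.1 * (b * E u p.2)| = E u p.1 * E u p.2 := by
    intro u p a b ha hb
    rcases ha with rfl | rfl <;> rcases hb with rfl | rfl <;>
      simp [abs_mul, Real.abs_exp]
  have hzpow : ∀ m : ℤ, (-1:ℝ)^m = 1 ∨ (-1:ℝ)^m = -1 := fun m => by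
    rcases Int.even_or_odd m with h | h
    · exact Or.inl h.neg_one_zpow
    · exact Or.inr h.neg_one_zpow
  have hG : Summable fun p : ℤ × ℤ => E t p.1 * ((-1:ℝ)^p.2 * E t p.2) := by
    refine hp0.of_norm_bounded fun p => ?_
    rw [Real.norm_eq_abs]
    rw [show E t p.1 * ((-1:ℝ)^p.2 * E t p.2) = (1:ℝ) * E t p.1 * ((-1:ℝ)^p.2 * E t p.2) by ring,
      habs t p 1 ((-1:ℝ)^p.2) (Or.inl rfl) (hzpow _)]
  rw [Summable.tsum_mul_tsum hs0 hs1 hG]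
  have hswap : ∑' p : ℤ × ℤ, E t p.2 * ((-1:ℝ)^p.1 * E t p.1)
      = ∑' p : ℤ × ℤ, E t p.1 * ((-1:ℝ)^p.2 * E t p.2) := by
    exact (Equiv.prodComm ℤ ℤ).tsum_eq fun p : ℤ × ℤ => E t p.1 * ((-1:ℝ)^p.2 * E t p.2)
  have hGs : Summable fun p : ℤ × ℤ => E t p.2 * ((-1:ℝ)^p.1 * E t p.1) := by
    refine hp0.of_norm_bounded fun p => ?_
    rw [Real.norm_eq_abs, show E t p.2 * ((-1:ℝ)^p.1 * E t p.1)
        = ((-1:ℝ)^p.1) * E t p.1 * ((1:ℝ) * E t p.2) by ring,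
      habs t p ((-1:ℝ)^p.1) 1 (hzpow _) (Or.inl rfl)]
  have havg : ∑' p : ℤ × ℤ, E t p.1 * ((-1:ℝ)^p.2 * E t p.2)
      = ∑' p : ℤ × ℤ, (((-1:ℝ)^p.1 + (-1:ℝ)^p.2)/2) * (E t p.1 * E t p.2) := by
    have h2 : ∑' p : ℤ × ℤ, E t p.1 * ((-1:ℝ)^p.2 * E t p.2)
        = (∑' p : ℤ × ℤ, (E t p.1 * ((-1:ℝ)^p.2 * E t p.2)
            + E t p.2 * ((-1:ℝ)^p.1 * E t p.1))) / 2 := by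
      rw [Summable.tsum_add hG hGs, hswap]
      ring
    rw [h2, ← tsum_div_const]
    refine tsum_congr fun p => ?_
    ring
  rw [havg]
  have hsupp : Function.support
      (fun p : ℤ × ℤ => (((-1:ℝ)^p.1 + (-1:ℝ)^p.2)/2) * (E t p.1 * E t p.2))
        ⊆ Set.range psi := by
    intro p hp
    rcases Int.even_or_odd (p.1 + p.2) with he | ho
    · obtain ⟨k, hk⟩ := he
      exact ⟨(k, p.1 - k), by simp only [psi, Prod.ext_iff]; omega⟩
    · exfalso
      apply hp
      show (((-1:ℝ)^p.1 + (-1:ℝ)^p.2)/2) * (E t p.1 * E t p.2) = 0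
      rcases Int.even_or_odd p.1 with h1 | h1 <;> rcases Int.even_or_odd p.2 with h2 | h2
      · obtain ⟨a, ha⟩ := h1; obtain ⟨b, hb⟩ := h2; obtain ⟨c, hc⟩ := ho; omega
      · rw [h1.neg_one_zpow, h2.neg_one_zpow]; ring
      · rw [h1.neg_one_zpow, h2.neg_one_zpow]; ring
      · obtain ⟨a, ha⟩ := h1; obtain ⟨b, hb⟩ := h2; obtain ⟨c, hc⟩ := ho; omega
  rw [← psi_inj.tsum_eq hsupp]
  have hR : ∀ p : ℤ × ℤ,
      (((-1:ℝ)^(psi p).1 + (-1:ℝ)^(psi p).2)/2) * (E t (psi p).1 * E t (psi p).2)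
        = ((-1:ℝ)^p.1 * E (2*t) p.1) * ((-1:ℝ)^p.2 * E (2*t) p.2) := by
    intro ⟨r, s⟩
    show (((-1:ℝ)^(r+s) + (-1:ℝ)^(r-s))/2) * (E t (r+s) * E t (r-s)) = _
    rw [E_psi, zpow_add₀ (by norm_num : (-1:ℝ) ≠ 0), neg_one_zpow_sub]
    ring
  rw [tsum_congr hR, sq]
  have hp12 : Summable fun p : ℤ × ℤ =>
      ((-1:ℝ)^p.1 * E (2*t) p.1) * ((-1:ℝ)^p.2 * E (2*t) p.2) := by
    refine (summable_prod0 h2t).of_norm_bounded fun p => ?_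
    rw [Real.norm_eq_abs, show ((-1:ℝ)^p.1 * E (2*t) p.1) * ((-1:ℝ)^p.2 * E (2*t) p.2)
        = ((-1:ℝ)^p.1) * E (2*t) p.1 * (((-1:ℝ)^p.2) * E (2*t) p.2) by ring,
      habs (2*t) p _ _ (hzpow _) (hzpow _)]
  rw [Summable.tsum_mul_tsum (summable_th1 h2t) (summable_th1 h2t) hp12]
end Dup


lemma th0_pos {t : ℝ} (ht : 0 < t) : 0 < th0 t :=
  Summable.tsum_pos (summable_th0 ht) (fun n => (Real.exp_pos _).le) 0 (Real.exp_pos _)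

lemma th0_dup {t : ℝ} (ht : 0 < t) : th0 t ^ 2 + th1 t ^ 2 = 2 * th0 (2*t) ^ 2 := dup1 ht
lemma th1_dup {t : ℝ} (ht : 0 < t) : th0 t * th1 t = th1 (2*t) ^ 2 := dup2 ht

lemma th1_nonneg {t : ℝ} (ht : 0 < t) : 0 ≤ th1 t := by
  have h := th1_dup ht
  nlinarith [sq_nonneg (th1 (2*t)), th0_pos ht]

lemma theta_bound {s : ℝ} (hs : 1 ≤ s) (ε : ℤ → ℝ) (hε : ∀ n, |ε n| ≤ 1) (hε0 : ε 0 = 1) :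
    |(∑' n : ℤ, ε n * Real.exp (-Real.pi * (n : ℝ) ^ 2 * s)) - 1|
      ≤ (Real.exp Real.pi * th0 1) * Real.exp (-Real.pi * s) := by
  have hs0 : (0:ℝ) < s := lt_of_lt_of_le one_pos hs
  set E : ℤ → ℝ := fun n => Real.exp (-Real.pi * (n : ℝ) ^ 2 * s) with hE
  have habs : ∀ n, |ε n * E n| ≤ E n := by
    intro n
    rw [abs_mul, Real.abs_exp]
    calc |ε n| * E n ≤ 1 * E n :=
          mul_le_mul_of_nonneg_right (hε n) (Real.exp_pos _).le
      _ = E n := one_mul _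
  have hsum : Summable fun n => ε n * E n :=
    (summable_th0 hs0).of_norm_bounded fun n => by rw [Real.norm_eq_abs]; exact habs n
  have h0 : ε 0 * E 0 = 1 := by simp [hE, hε0]
  rw [Summable.tsum_eq_add_tsum_ite hsum 0, h0, add_sub_cancel_left]
  -- key termwise exponential bound for n ≠ 0
  have hterm : ∀ n : ℤ, n ≠ 0 →
      E n ≤ Real.exp Real.pi * Real.exp (-Real.pi * s) * Real.exp (-Real.pi * (n:ℝ)^2 * 1) := by
    intro n hn
    rw [← Real.exp_add, ← Real.exp_add, Real.exp_le_exp]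
    have hn2 : (1:ℝ) ≤ (n:ℝ)^2 := by
      have : (1:ℤ) ≤ n^2 := by nlinarith [Int.one_le_abs hn, sq_abs n]
      exact_mod_cast this
    nlinarith [Real.pi_pos, mul_nonneg (mul_nonneg Real.pi_pos.le (sub_nonneg.2 hn2)) (sub_nonneg.2 hs)]
  set g : ℤ → ℝ := fun n => if n = 0 then 0 else
    Real.exp Real.pi * Real.exp (-Real.pi * s) * Real.exp (-Real.pi * (n:ℝ)^2 * 1) with hg
  have hgsum : Summable g := by
    refine ((summable_th0 one_pos).mul_left
      (Real.exp Real.pi * Real.exp (-Real.pi * s))).of_norm_bounded fun n => ?_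
    rw [Real.norm_eq_abs, hg]
    by_cases h : n = 0 <;> simp [h, abs_mul, Real.abs_exp, mul_assoc]
    positivity
  have habs2 : ∀ n : ℤ, |if n = 0 then 0 else ε n * E n| ≤ g n := by
    intro n
    by_cases h : n = 0
    · simp [h, hg]
    · simp only [h, if_false, hg]
      exact le_trans (habs n) (hterm n h)
  have hfabs : Summable fun n : ℤ => |if n = 0 then 0 else ε n * E n| := by
    refine hgsum.of_norm_bounded fun n => ?_
    rw [Real.norm_eq_abs, abs_abs]
    exact habs2 n
  calc |∑' n : ℤ, if n = 0 then 0 else ε n * E n|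
      ≤ ∑' n : ℤ, |if n = 0 then 0 else ε n * E n| := by
        have := norm_tsum_le_tsum_norm (f := fun n : ℤ => if n = 0 then 0 else ε n * E n)
          (by simpa [Real.norm_eq_abs] using hfabs)
        simpa [Real.norm_eq_abs] using this
    _ ≤ ∑' n : ℤ, g n := Summable.tsum_le_tsum habs2 hfabs hgsum
    _ ≤ (Real.exp Real.pi * Real.exp (-Real.pi * s)) * th0 1 := by
        have : ∀ n : ℤ, g n ≤ (Real.exp Real.pi * Real.exp (-Real.pi * s)) *
            Real.exp (-Real.pi * (n:ℝ)^2 * 1) := by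
          intro n
          by_cases h : n = 0 <;> simp [h, hg]
          positivity
        calc ∑' n : ℤ, g n ≤ ∑' n : ℤ, (Real.exp Real.pi * Real.exp (-Real.pi * s)) *
              Real.exp (-Real.pi * (n:ℝ)^2 * 1) :=
              Summable.tsum_le_tsum this hgsum ((summable_th0 one_pos).mul_left _)
          _ = _ := by rw [tsum_mul_left]; rfl
    _ = (Real.exp Real.pi * th0 1) * Real.exp (-Real.pi * s) := by ring

lemma theta_tendsto {t : ℝ} (ht : 0 < t) (ε : ℤ → ℝ) (hε : ∀ n, |ε n| ≤ 1) (hε0 : ε 0 = 1) :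
    Tendsto (fun n : ℕ => ∑' m : ℤ, ε m * Real.exp (-Real.pi * (m : ℝ) ^ 2 * ((2:ℝ)^n * t)))
      atTop (nhds 1) := by
  have hgrow : Tendsto (fun n : ℕ => (2:ℝ)^n * t) atTop atTop :=
    (tendsto_pow_atTop_atTop_of_one_lt one_lt_two).atTop_mul_const ht
  have hexp : Tendsto (fun n : ℕ =>
      (Real.exp Real.pi * th0 1) * Real.exp (-Real.pi * ((2:ℝ)^n * t))) atTop (nhds 0) := by
    have h1 : Tendsto (fun n : ℕ => -Real.pi * ((2:ℝ)^n * t)) atTop atBot :=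
      hgrow.const_mul_atTop_of_neg (neg_neg_iff_pos.2 Real.pi_pos)
    have h2 : Tendsto (fun n : ℕ => Real.exp (-Real.pi * ((2:ℝ)^n * t))) atTop (nhds 0) :=
      Real.tendsto_exp_atBot.comp h1
    simpa using h2.const_mul (Real.exp Real.pi * th0 1)
  rw [tendsto_iff_dist_tendsto_zero]
  refine squeeze_zero' (Eventually.of_forall fun _ => dist_nonneg) ?_ hexp
  filter_upwards [hgrow.eventually_ge_atTop 1] with n hn
  rw [Real.dist_eq]
  exact theta_bound hn ε hε hε0

lemma th1_tendsto {t : ℝ} (ht : 0 < t) :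
    Tendsto (fun n : ℕ => th1 ((2:ℝ)^n * t)) atTop (nhds 1) :=
  theta_tendsto ht (fun m => (-1:ℝ)^m) (fun m => (abs_neg_one_zpow m).le) (zpow_zero _)

lemma th0_tendsto {t : ℝ} (ht : 0 < t) :
    Tendsto (fun n : ℕ => th0 ((2:ℝ)^n * t)) atTop (nhds 1) := by
  have h := theta_tendsto ht (fun _ => (1:ℝ)) (fun _ => by norm_num) rfl
  refine h.congr fun n => ?_
  exact tsum_congr fun m => one_mul _

lemma th1_pos {t : ℝ} (ht : 0 < t) : 0 < th1 t := by
  rcases (th1_nonneg ht).lt_or_eq with h | h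
  · exact h
  · exfalso
    have hzero : ∀ n : ℕ, th1 ((2:ℝ)^n * t) = 0 := by
      intro n
      induction n with
      | zero => simpa using h.symm
      | succ k ih =>
        have hkt : (0:ℝ) < (2:ℝ)^k * t := by positivity
        have hd := th1_dup hkt
        rw [ih, mul_zero] at hd
        have h2 : (2:ℝ) * ((2:ℝ)^k * t) = (2:ℝ)^(k+1) * t := by ring
        rw [h2] at hd
        exact pow_eq_zero_iff (by norm_num) |>.mp hd.symm
    have h1 := th1_tendsto ht
    rw [show (fun n : ℕ => th1 ((2:ℝ)^n * t)) = fun _ => (0:ℝ) from funext hzero] at h1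
    exact zero_ne_one (tendsto_nhds_unique tendsto_const_nhds h1)

lemma jt0_eq (t : ℝ) :
    jacobiTheta' 0 (t * Complex.I) =
      ((∑' n : ℤ, Real.exp (-Real.pi * (n : ℝ) ^ 2 * t) : ℝ) : ℂ) := by
  rw [jacobiTheta', Complex.ofReal_tsum]
  refine tsum_congr fun n => ?_
  rw [Complex.ofReal_exp]
  congr 1
  push_cast
  rw [Complex.ext_iff]
  simp [Complex.I_sq]
  constructor <;> ring

lemma jt1_eq (t : ℝ) :
    jacobiTheta' 1 (t * Complex.I) =
      ((∑' n : ℤ, (-1 : ℝ) ^ n * Real.exp (-Real.pi * (n : ℝ) ^ 2 * t) : ℝ) : ℂ) := by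
  rw [jacobiTheta', Complex.ofReal_tsum]
  refine tsum_congr fun n => ?_
  have h : (Real.pi : ℂ) * Complex.I * ((n : ℂ) ^ 2 * (t * Complex.I) + (1 : ℕ) * n)
      = ((-Real.pi * (n : ℝ) ^ 2 * t : ℝ) : ℂ) + n * (Real.pi * Complex.I) := by
    push_cast
    rw [Complex.ext_iff]
    simp [Complex.I_sq]
    constructor <;> ring
  rw [h, Complex.exp_add, Complex.exp_int_mul, Complex.exp_pi_mul_I, ← Complex.ofReal_exp]
  push_cast
  ring


theorem stmt_9 (a0 a1 t : ℝ) (h1 : 0 < a1) (h2 : a1 < a0) (ht : 0 < t)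
    (hratio : jacobiTheta' 1 (t * Complex.I) ^ 2 / jacobiTheta' 0 (t * Complex.I) ^ 2 =
      (a1 : ℂ) / (a0 : ℂ))
    (l : ℝ)
    (hl0 : Tendsto (fun n => (agmSeq a0 a1 n).1) atTop (nhds l))
    (hl1 : Tendsto (fun n => (agmSeq a0 a1 n).2) atTop (nhds l)) :
    ((a0 / l : ℝ) : ℂ) = jacobiTheta' 0 (t * Complex.I) ^ 2 := by
  have hθ0 := th0_pos ht
  have hθ1 := th1_pos ht
  have ha0 : (0:ℝ) < a0 := lt_trans h1 h2
  have h0c : jacobiTheta' 0 (t * Complex.I) = ((th0 t : ℝ) : ℂ) := jt0_eq t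
  have h1c : jacobiTheta' 1 (t * Complex.I) = ((th1 t : ℝ) : ℂ) := jt1_eq t
  have hr : th1 t ^ 2 / th0 t ^ 2 = a1 / a0 := by
    rw [h0c, h1c] at hratio
    exact_mod_cast hratio
  set c : ℝ := a0 / th0 t ^ 2 with hc
  have hcpos : 0 < c := by positivity
  have ha1 : a1 = c * th1 t ^ 2 := by
    field_simp at hr
    rw [hc]
    field_simp
    linarith [hr]
  have key : ∀ n : ℕ, agmSeq a0 a1 n
      = (c * th0 ((2:ℝ)^n * t) ^ 2, c * th1 ((2:ℝ)^n * t) ^ 2) := by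
    intro n
    induction n with
    | zero =>
      simp only [agmSeq, pow_zero, one_mul]
      refine Prod.ext ?_ ?_
      · show a0 = c * th0 t ^ 2
        rw [hc]
        field_simp
      · exact ha1
    | succ k ih =>
      have hs : (0:ℝ) < (2:ℝ)^k * t := by positivity
      have hθ0s := th0_pos hs
      have hθ1s := th1_pos hs
      have h2s : (2:ℝ)^(k+1) * t = 2 * ((2:ℝ)^k * t) := by ring
      refine Prod.ext ?_ ?_
      · show ((agmSeq a0 a1 k).1 + (agmSeq a0 a1 k).2) / 2 = _
        rw [ih]
        show (c * th0 ((2:ℝ)^k * t) ^ 2 + c * th1 ((2:ℝ)^k * t) ^ 2) / 2 = _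
        rw [h2s]
        have hd := th0_dup hs
        nlinarith [hd]
      · show Real.sqrt ((agmSeq a0 a1 k).1 * (agmSeq a0 a1 k).2) = _
        rw [ih]
        show Real.sqrt (c * th0 ((2:ℝ)^k * t) ^ 2 * (c * th1 ((2:ℝ)^k * t) ^ 2)) = _
        rw [show c * th0 ((2:ℝ)^k * t) ^ 2 * (c * th1 ((2:ℝ)^k * t) ^ 2)
            = (c * (th0 ((2:ℝ)^k * t) * th1 ((2:ℝ)^k * t))) ^ 2 by ring,
          Real.sqrt_sq (by positivity), th1_dup hs, h2s]
  have hlc : Tendsto (fun n => (agmSeq a0 a1 n).1) atTop (nhds c) := by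
    have heq : (fun n : ℕ => (agmSeq a0 a1 n).1)
        = fun n : ℕ => c * th0 ((2:ℝ)^n * t) ^ 2 := funext fun n => by rw [key n]
    rw [heq]
    have h := ((th0_tendsto ht).pow 2).const_mul c
    simpa using h
  have hlceq : l = c := tendsto_nhds_unique hl0 hlc
  have hfin : a0 / l = th0 t ^ 2 := by
    rw [hlceq, hc]
    field_simp
  rw [hfin, h0c]
  push_cast
  ring
end
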